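/- The integral over all real t of t·φ(t)·Φ(t) dt equals 1/(2√π), where φ and Φ are the PDF and CDF of the standard normal distribution. -/

import Mathlib

open MeasureTheory Real Filter

noncomputable def phi (t : ℝ) : ℝ := Real.exp (-t^2/2) / Real.sqrt (2*Real.pi)

noncomputable def Phi (x : ℝ) : ℝ := ∫ s in Set.Iic x, phi s

lemma phi_eq (t : ℝ) : phi t = Real.exp (-(1/2) * t^2) / Real.sqrt (2*Real.pi) := by
  rw [phi]; ring_nf

lemma phi_cont : Continuous phi := by
  unfold phi; fun_prop

lemma phi_nonneg (t : ℝ) : 0 ≤ phi t :=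
  div_nonneg (Real.exp_nonneg _) (Real.sqrt_nonneg _)

lemma phi_integrable : Integrable phi := by
  have h := (integrable_exp_neg_mul_sq (by norm_num : (0:ℝ) < 1/2)).div_const
    (Real.sqrt (2*Real.pi))
  exact h.congr (Eventually.of_forall fun t => (phi_eq t).symm)

lemma id_mul_phi_integrable : Integrable (fun t => t * phi t) := by
  have h := (integrable_mul_exp_neg_mul_sq (by norm_num : (0:ℝ) < 1/2)).div_const
    (Real.sqrt (2*Real.pi))
  apply h.congr (Eventually.of_forall fun t => ?_)
  rw [phi_eq]; ring

lemma phi_sq_integrable : Integrable (fun t => phi t * phi t) := by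
  have h := (integrable_exp_neg_mul_sq (by norm_num : (0:ℝ) < 1)).div_const (2*Real.pi)
  apply h.congr (Eventually.of_forall fun t => ?_)
  rw [phi, div_mul_div_comm, ← Real.exp_add, Real.mul_self_sqrt (by positivity)]
  ring_nf

lemma Phi_hasDeriv (x : ℝ) : HasDerivAt Phi (phi x) x := by
  have key : ∀ y : ℝ, Phi y = Phi 0 + ∫ t in (0:ℝ)..y, phi t := by
    intro y
    have := intervalIntegral.integral_Iic_sub_Iic
      (phi_integrable.integrableOn (s := Set.Iic 0))
      (phi_integrable.integrableOn (s := Set.Iic y))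
    rw [Phi, Phi]; linarith [this]
  have hd : HasDerivAt (fun y => Phi 0 + ∫ t in (0:ℝ)..y, phi t) (phi x) x := by
    apply HasDerivAt.const_add
    exact intervalIntegral.integral_hasDerivAt_right
      (phi_cont.intervalIntegrable _ _)
      (phi_cont.stronglyMeasurableAtFilter _ _) phi_cont.continuousAt
  exact hd.congr_of_eventuallyEq (Eventually.of_forall key)

lemma negphi_hasDeriv (x : ℝ) : HasDerivAt (fun t => -phi t) (x * phi x) x := by
  have h1 : HasDerivAt (fun t : ℝ => -t^2/2) (-x) x := by
    have h0 := ((hasDerivAt_pow 2 x).neg).div_const 2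
    refine (h0.congr_deriv (by push_cast; ring)).congr_of_eventuallyEq (Eventually.of_forall fun t => ?_)
    simp only [Pi.neg_apply]
  have h2 : HasDerivAt (fun t : ℝ => Real.exp (-t^2/2)) (Real.exp (-x^2/2) * (-x)) x := h1.exp
  have h3 := (h2.div_const (Real.sqrt (2*Real.pi))).neg
  have he : -(Real.exp (-x^2/2) * (-x) / Real.sqrt (2*Real.pi)) = x * phi x := by
    rw [phi]; ring
  rw [he] at h3
  exact h3

lemma Phi_bdd (x : ℝ) : ‖Phi x‖ ≤ ∫ t : ℝ, phi t := by
  rw [Phi, Real.norm_eq_abs,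
    abs_of_nonneg (setIntegral_nonneg measurableSet_Iic fun t _ => phi_nonneg t)]
  exact MeasureTheory.setIntegral_le_integral phi_integrable (Eventually.of_forall phi_nonneg)

theorem stmt2 : ∫ t : ℝ, t * phi t * Phi t = 1 / (2 * Real.sqrt Real.pi) := by
  have hΦcont : Continuous Phi := by
    rw [continuous_iff_continuousAt]
    exact fun x => (Phi_hasDeriv x).continuousAt
  have hbdd : ∃ C, ∀ x, ‖Phi x‖ ≤ C := ⟨_, Phi_bdd⟩
  have huv' : Integrable (Phi * fun x => x * phi x) :=
    id_mul_phi_integrable.bdd_mul hΦcont.aestronglyMeasurable (Eventually.of_forall hbdd.choose_spec)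
  have hu'v : Integrable (phi * fun x => -phi x) := by
    apply (phi_sq_integrable.neg).congr (Eventually.of_forall fun t => ?_)
    simp [mul_comm]
  have huv : Integrable (Phi * fun x => -phi x) :=
    (phi_integrable.neg).bdd_mul hΦcont.aestronglyMeasurable (Eventually.of_forall hbdd.choose_spec)
  have key := integral_mul_deriv_eq_deriv_mul_of_integrable
    (fun x _ => Phi_hasDeriv x) (fun x _ => negphi_hasDeriv x) huv' hu'v huv
  have h1 : ∫ t : ℝ, t * phi t * Phi t = ∫ x : ℝ, Phi x * (x * phi x) := by
    congr 1; ext t; ring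
  have h2 : (∫ x : ℝ, phi x * -phi x) = -∫ x : ℝ, phi x * phi x := by
    rw [← integral_neg]; congr 1; ext t; ring
  rw [h1, key, h2, neg_neg]
  have h3 : (∫ x : ℝ, phi x * phi x) = (∫ x : ℝ, Real.exp (-1 * x^2)) / (2*Real.pi) := by
    rw [← integral_div]
    congr 1; ext t
    rw [phi, div_mul_div_comm, ← Real.exp_add, Real.mul_self_sqrt (by positivity)]
    ring_nf
  rw [h3, integral_gaussian]
  rw [div_one]
  have hπ : Real.sqrt Real.pi * Real.sqrt Real.pi = Real.pi := Real.mul_self_sqrt pi_pos.le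
  have hπ' : (0:ℝ) < Real.sqrt Real.pi := Real.sqrt_pos.mpr pi_pos
  field_simp
  linarith [hπ]
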